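/- Let H be a complex Hilbert space and let A be a unital separable C*-subalgebra of B(H) that is quasidiagonal, i.e., there is an increasing sequence of finite-rank orthogonal projections (p_i) on H tending to the identity in the strong operator topology such that ‖x·p_i − p_i·x‖ → 0 as i → ∞ for every x ∈ A. Let x_1, …, x_n ∈ A. Then for every ε > 0, every finite family P_1, …, P_r of *-polynomials in n variables, and every finite family ξ_1, …, ξ_s of vectors in H, there exists a finite-rank orthogonal projection p on H such that: (i) ‖P_i(p·x_1·p, …, p·x_n·p)ξ_j − P_i(x_1, …, x_n)ξ_j‖ < ε for all 1 ≤ i ≤ r and 1 ≤ j ≤ s, where the evaluations are taken in B(H); and (ii) |‖P_i(c_p(x_1), …, c_p(x_n))‖_{B(pH)} − ‖P_i(x_1, …, x_n)‖_{B(H)}| < ε for all 1 ≤ i ≤ r, where pH is the (finite-dimensional) range of p and c_p(x) ∈ B(pH) denotes the compression of x to pH (the map ξ ↦ p(xξ) restricted to pH), the evaluation being taken in the unital algebra B(pH). -/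

import Mathlib

open Filter Topology
set_option linter.unusedSectionVars false
set_option linter.unusedVariables false
set_option maxHeartbeats 1000000

/-- Evaluation of a `*`-polynomial in `n` variables (an element of
`FreeAlgebra ℂ (Fin n ⊕ Fin n)`) at an `n`-tuple of a unital complex `*`-algebra:
`Sum.inl i ↦ x i` and `Sum.inr i ↦ star (x i)`. -/
noncomputable def starEval {A : Type*} [Ring A] [Algebra ℂ A] [StarRing A] {n : ℕ}
    (P : FreeAlgebra ℂ (Fin n ⊕ Fin n)) (x : Fin n → A) : A :=
  FreeAlgebra.lift ℂ (Sum.elim x fun i => star (x i)) P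

/-- The compression `c_p(x) : pH → pH`, `ξ ↦ p (x ξ)`, of `x` to the range of `p`. -/
noncomputable def compress {H : Type*} [NormedAddCommGroup H] [InnerProductSpace ℂ H]
    (p x : H →L[ℂ] H) : LinearMap.range (p : H →ₗ[ℂ] H) →L[ℂ] LinearMap.range (p : H →ₗ[ℂ] H) :=
  (p.codRestrict (LinearMap.range (p : H →ₗ[ℂ] H)) fun ξ => LinearMap.mem_range_self (p : H →ₗ[ℂ] H) ξ).comp
    (x.comp (LinearMap.range (p : H →ₗ[ℂ] H)).subtypeL)

section aux
variable {H : Type} [NormedAddCommGroup H] [InnerProductSpace ℂ H] [CompleteSpace H]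

lemma compress_coe (p x : H →L[ℂ] H) (η : LinearMap.range (p : H →ₗ[ℂ] H)) :
    (compress p x η : H) = p (x η) := rfl

lemma norm_sub_coe (η : LinearMap.range ((0 : H →L[ℂ] H) : H →ₗ[ℂ] H)) : ‖η‖ = ‖(η : H)‖ := rfl

lemma proj_norm_le_one {p : H →L[ℂ] H} (hsa : IsSelfAdjoint p) (hid : IsIdempotentElem p) :
    ‖p‖ ≤ 1 := by
  have h1 : ‖p‖ * ‖p‖ = ‖p‖ := by
    calc ‖p‖ * ‖p‖ = ‖star p * p‖ := (CStarRing.norm_star_mul_self).symm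
    _ = ‖p‖ := by rw [hsa.star_eq, hid.eq]
  nlinarith [norm_nonneg p]

lemma proj_fix {p : H →L[ℂ] H} (hid : IsIdempotentElem p) {η : H}
    (hη : η ∈ LinearMap.range (p : H →ₗ[ℂ] H)) : p η = η := by
  obtain ⟨ζ, rfl⟩ := hη
  have := congrFun (congrArg (DFunLike.coe) hid.eq) ζ
  simpa using this

lemma compress_one {p : H →L[ℂ] H} (hid : IsIdempotentElem p) :
    compress p (1 : H →L[ℂ] H) = 1 := by
  ext η
  exact proj_fix hid η.2

lemma compress_star {p : H →L[ℂ] H} (hsa : IsSelfAdjoint p) (hid : IsIdempotentElem p)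
    [CompleteSpace (LinearMap.range (p : H →ₗ[ℂ] H))] (y : H →L[ℂ] H) :
    compress p (star y) = star (compress p y) := by
  have main : compress p (star y) = ContinuousLinearMap.adjoint (compress p y) := by
    rw [ContinuousLinearMap.eq_adjoint_iff]
    intro a b
    have hpa : p (a : H) = (a : H) := proj_fix hid a.2
    have hpb : p (b : H) = (b : H) := proj_fix hid b.2
    have h1 : (inner ℂ (compress p (star y) a) b : ℂ)
        = inner ℂ (p ((ContinuousLinearMap.adjoint y) (a : H))) (b : H) := by
      rw [← ContinuousLinearMap.star_eq_adjoint]; rfl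
    have h2 : (inner ℂ a (compress p y b) : ℂ) = inner ℂ (a : H) (p (y (b : H))) := rfl
    rw [h1, h2]
    calc inner ℂ (p ((ContinuousLinearMap.adjoint y) (a : H))) (b : H)
        = inner ℂ ((ContinuousLinearMap.adjoint p) ((ContinuousLinearMap.adjoint y) (a : H))) (b : H) := by
          rw [hsa.adjoint_eq]
      _ = inner ℂ ((ContinuousLinearMap.adjoint y) (a : H)) (p (b : H)) := by
          rw [ContinuousLinearMap.adjoint_inner_left]
      _ = inner ℂ ((ContinuousLinearMap.adjoint y) (a : H)) (b : H) := by rw [hpb]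
      _ = (inner ℂ (a : H) (y (b : H)) : ℂ) := by rw [ContinuousLinearMap.adjoint_inner_left]
      _ = inner ℂ (p (a : H)) (y (b : H)) := by rw [hpa]
      _ = inner ℂ ((ContinuousLinearMap.adjoint p) (a : H)) (y (b : H)) := by rw [hsa.adjoint_eq]
      _ = inner ℂ (a : H) (p (y (b : H))) := by rw [ContinuousLinearMap.adjoint_inner_left]
  rw [main, ContinuousLinearMap.star_eq_adjoint]

lemma norm_compress_le {p : H →L[ℂ] H} (hsa : IsSelfAdjoint p) (hid : IsIdempotentElem p)
    (y : H →L[ℂ] H) : ‖compress p y‖ ≤ ‖y‖ := by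
  refine ContinuousLinearMap.opNorm_le_bound _ (norm_nonneg y) fun η => ?_
  have : ‖compress p y η‖ = ‖p (y (η : H))‖ := rfl
  rw [this]
  calc ‖p (y (η:H))‖ ≤ ‖p‖ * ‖y (η:H)‖ := p.le_opNorm _
  _ ≤ 1 * (‖y‖ * ‖(η:H)‖) := by
      gcongr
      · exact proj_norm_le_one hsa hid
      · exact y.le_opNorm _
  _ = ‖y‖ * ‖η‖ := by rw [one_mul]; rfl

lemma compress_mul_defect {p : H →L[ℂ] H} (hsa : IsSelfAdjoint p) (hid : IsIdempotentElem p)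
    (a b : H →L[ℂ] H) :
    ‖compress p a * compress p b - compress p (a * b)‖ ≤ ‖a‖ * ‖p * b - b * p‖ := by
  refine ContinuousLinearMap.opNorm_le_bound _ (by positivity) fun η => ?_
  have hpη : p (η : H) = η := proj_fix hid η.2
  have key : ((compress p a * compress p b - compress p (a * b)) η : H)
      = p (a ((p * b - b * p) (η : H))) := by
    show p (a ((p (b (η:H))))) - p (a (b (η:H))) = p (a ((p * b - b * p) (η : H)))
    have hc : (p * b - b * p) (η : H) = p (b (η:H)) - b (η:H) := by
      show p (b (η:H)) - b (p (η:H)) = _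
      rw [hpη]
    rw [hc, map_sub a, map_sub p]
  have : ‖((compress p a * compress p b - compress p (a * b)) η : H)‖
      ≤ ‖a‖ * ‖p * b - b * p‖ * ‖η‖ := by
    rw [key]
    calc ‖p (a ((p * b - b * p) (η : H)))‖ ≤ ‖p‖ * ‖a ((p * b - b * p) (η : H))‖ :=
        p.le_opNorm _
    _ ≤ 1 * (‖a‖ * (‖p * b - b * p‖ * ‖(η:H)‖)) := by
        gcongr
        · exact proj_norm_le_one hsa hid
        · exact (a.le_opNorm _).trans (by gcongr; exact (p*b - b*p).le_opNorm _)
    _ = ‖a‖ * ‖p * b - b * p‖ * ‖η‖ := by ring_nf; rfl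
  exact this

lemma compress_add (p a b : H →L[ℂ] H) :
    compress p (a + b) = compress p a + compress p b := by
  refine ContinuousLinearMap.ext fun η => Subtype.ext ?_
  show p ((a + b) (η : H)) = p (a (η : H)) + p (b (η : H))
  rw [ContinuousLinearMap.add_apply, map_add]

lemma compress_smul (p : H →L[ℂ] H) (c : ℂ) (a : H →L[ℂ] H) :
    compress p (c • a) = c • compress p a := by
  refine ContinuousLinearMap.ext fun η => Subtype.ext ?_
  show p ((c • a) (η : H)) = c • p (a (η : H))
  rw [ContinuousLinearMap.smul_apply, map_smul]

end aux

section ev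
variable {A : Type*} [Ring A] [Algebra ℂ A] [StarRing A] {n : ℕ}

lemma starEval_mul (P Q : FreeAlgebra ℂ (Fin n ⊕ Fin n)) (x : Fin n → A) :
    starEval (P * Q) x = starEval P x * starEval Q x := map_mul _ _ _

lemma starEval_add (P Q : FreeAlgebra ℂ (Fin n ⊕ Fin n)) (x : Fin n → A) :
    starEval (P + Q) x = starEval P x + starEval Q x := map_add _ _ _

lemma starEval_algebraMap (c : ℂ) (x : Fin n → A) :
    starEval (algebraMap ℂ _ c) x = algebraMap ℂ A c := AlgHom.commutes _ _

lemma starEval_inl (a : Fin n) (x : Fin n → A) :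
    starEval (FreeAlgebra.ι ℂ (Sum.inl a)) x = x a := by
  simp [starEval]

lemma starEval_inr (a : Fin n) (x : Fin n → A) :
    starEval (FreeAlgebra.ι ℂ (Sum.inr a)) x = star (x a) := by
  simp [starEval]

lemma starEval_mem {B : Type*} [Ring B] [Algebra ℂ B] [StarRing B] [StarModule ℂ B]
    (S : StarSubalgebra ℂ B) (x : Fin n → B) (hx : ∀ i, x i ∈ S)
    (Q : FreeAlgebra ℂ (Fin n ⊕ Fin n)) : starEval Q x ∈ S := by
  induction Q with
  | grade0 c => rw [starEval_algebraMap]; exact S.algebraMap_mem c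
  | grade1 i =>
      cases i with
      | inl a => rw [starEval_inl]; exact hx a
      | inr a => rw [starEval_inr]; exact star_mem (hx a)
  | mul a b ha hb => rw [starEval_mul]; exact mul_mem ha hb
  | add a b ha hb => rw [starEval_add]; exact add_mem ha hb

end ev

section conv
variable {H : Type} [NormedAddCommGroup H] [InnerProductSpace ℂ H] [CompleteSpace H]

lemma aux_strong {p : ℕ → H →L[ℂ] H} (hnorm : ∀ i, ‖p i‖ ≤ 1)
    (hstrong : ∀ ξ : H, Tendsto (fun i => p i ξ) atTop (𝓝 ξ))
    {v : ℕ → H} {w : H} (hv : Tendsto v atTop (𝓝 w)) :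
    Tendsto (fun i => p i (v i)) atTop (𝓝 w) := by
  rw [tendsto_iff_norm_sub_tendsto_zero]
  have hb : ∀ i, ‖p i (v i) - w‖ ≤ ‖v i - w‖ + ‖p i w - w‖ := by
    intro i
    calc ‖p i (v i) - w‖ = ‖p i (v i - w) + (p i w - w)‖ := by rw [map_sub]; abel_nf
    _ ≤ ‖p i (v i - w)‖ + ‖p i w - w‖ := norm_add_le _ _
    _ ≤ ‖v i - w‖ + ‖p i w - w‖ := by
        gcongr
        calc ‖p i (v i - w)‖ ≤ ‖p i‖ * ‖v i - w‖ := (p i).le_opNorm _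
        _ ≤ 1 * ‖v i - w‖ := by gcongr; exact hnorm i
        _ = ‖v i - w‖ := one_mul _
  have h1 : Tendsto (fun i => ‖v i - w‖ + ‖p i w - w‖) atTop (𝓝 0) := by
    have := ((tendsto_iff_norm_sub_tendsto_zero).mp hv).add
      ((tendsto_iff_norm_sub_tendsto_zero).mp (hstrong w))
    simpa using this
  exact squeeze_zero (fun i => norm_nonneg _) hb h1

lemma tendsto_norm_compress {p : ℕ → H →L[ℂ] H}
    (hsa : ∀ i, IsSelfAdjoint (p i)) (hid : ∀ i, IsIdempotentElem (p i))
    (hstrong : ∀ ξ : H, Tendsto (fun i => p i ξ) atTop (𝓝 ξ))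
    (y : H →L[ℂ] H) :
    Tendsto (fun i => ‖compress (p i) y‖) atTop (𝓝 ‖y‖) := by
  have hnorm : ∀ i, ‖p i‖ ≤ 1 := fun i => proj_norm_le_one (hsa i) (hid i)
  rw [Metric.tendsto_atTop]
  intro ε hε
  obtain ⟨ζ, hζ1, hζ2⟩ := y.exists_lt_apply_of_lt_opNorm (show ‖y‖ - ε/2 < ‖y‖ by linarith)
  have hconv : Tendsto (fun i => p i (y (p i ζ))) atTop (𝓝 (y ζ)) :=
    aux_strong hnorm hstrong ((y.continuous.tendsto ζ).comp (hstrong ζ))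
  have hconv' : Tendsto (fun i => ‖p i (y (p i ζ))‖) atTop (𝓝 ‖y ζ‖) :=
    (continuous_norm.tendsto _).comp hconv
  have hev : ∀ᶠ i in atTop, ‖y‖ - ε < ‖p i (y (p i ζ))‖ := by
    have : ∀ᶠ t in 𝓝 ‖y ζ‖, ‖y‖ - ε < t := by
      apply eventually_gt_nhds
      linarith
    exact hconv'.eventually this
  obtain ⟨N, hN⟩ := (eventually_atTop).mp hev
  refine ⟨N, fun i hi => ?_⟩
  have hub : ‖compress (p i) y‖ ≤ ‖y‖ := norm_compress_le (hsa i) (hid i) y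
  have hlb : ‖y‖ - ε < ‖compress (p i) y‖ := by
    have hmem : p i ζ ∈ LinearMap.range (p i : H →ₗ[ℂ] H) := LinearMap.mem_range_self _ _
    have happ : ‖compress (p i) y ⟨p i ζ, hmem⟩‖ = ‖p i (y (p i ζ))‖ := rfl
    have hη : ‖(⟨p i ζ, hmem⟩ : LinearMap.range (p i : H →ₗ[ℂ] H))‖ ≤ 1 := by
      show ‖p i ζ‖ ≤ 1
      calc ‖p i ζ‖ ≤ ‖p i‖ * ‖ζ‖ := (p i).le_opNorm _
      _ ≤ 1 * 1 := by
          apply mul_le_mul (hnorm i) hζ1.le (norm_nonneg _) zero_le_one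
      _ = 1 := one_mul 1
    calc ‖y‖ - ε < ‖p i (y (p i ζ))‖ := hN i hi
    _ = ‖compress (p i) y ⟨p i ζ, hmem⟩‖ := happ.symm
    _ ≤ ‖compress (p i) y‖ * ‖(⟨p i ζ, hmem⟩ : LinearMap.range (p i : H →ₗ[ℂ] H))‖ :=
        (compress (p i) y).le_opNorm _
    _ ≤ ‖compress (p i) y‖ * 1 := by gcongr
    _ = ‖compress (p i) y‖ := mul_one _
  rw [Real.dist_eq, abs_lt]
  constructor <;> linarith

end conv

set_option maxHeartbeats 1000000

section main
variable {H : Type} [NormedAddCommGroup H] [InnerProductSpace ℂ H] [CompleteSpace H]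

lemma compress_poly_tendsto
    (A : StarSubalgebra ℂ (H →L[ℂ] H))
    {p : ℕ → H →L[ℂ] H}
    [∀ i, FiniteDimensional ℂ (LinearMap.range (p i : H →ₗ[ℂ] H))]
    (hsa : ∀ i, IsSelfAdjoint (p i)) (hid : ∀ i, IsIdempotentElem (p i))
    (hcomm : ∀ x ∈ A, Tendsto (fun i => ‖x * p i - p i * x‖) atTop (𝓝 (0:ℝ)))
    {n : ℕ} (x : Fin n → H →L[ℂ] H) (hx : ∀ i, x i ∈ A)
    (Q : FreeAlgebra ℂ (Fin n ⊕ Fin n)) :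
    Tendsto (fun i =>
        ‖starEval Q (fun a => compress (p i) (x a)) - compress (p i) (starEval Q x)‖)
      atTop (𝓝 (0:ℝ)) := by
  induction Q with
  | grade0 c =>
      have hz : (fun i =>
          ‖starEval (algebraMap ℂ _ c) (fun a => compress (p i) (x a))
            - compress (p i) (starEval (algebraMap ℂ _ c) x)‖) = fun _ => (0:ℝ) := by
        funext i
        rw [starEval_algebraMap, starEval_algebraMap, Algebra.algebraMap_eq_smul_one,
          Algebra.algebraMap_eq_smul_one, compress_smul, compress_one (hid i), sub_self]
        exact norm_zero (E := LinearMap.range (p i : H →ₗ[ℂ] H) →L[ℂ] LinearMap.range (p i : H →ₗ[ℂ] H))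
      rw [hz]; exact tendsto_const_nhds
  | grade1 j =>
      cases j with
      | inl a =>
          have hz : (fun i =>
              ‖starEval (FreeAlgebra.ι ℂ (Sum.inl a)) (fun b => compress (p i) (x b))
                - compress (p i) (starEval (FreeAlgebra.ι ℂ (Sum.inl a)) x)‖)
              = fun _ => (0:ℝ) := by
            funext i
            rw [starEval_inl, starEval_inl, sub_self]
            exact norm_zero (E := LinearMap.range (p i : H →ₗ[ℂ] H) →L[ℂ] LinearMap.range (p i : H →ₗ[ℂ] H))
          rw [hz]; exact tendsto_const_nhds
      | inr a =>
          have hz : (fun i =>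
              ‖starEval (FreeAlgebra.ι ℂ (Sum.inr a)) (fun b => compress (p i) (x b))
                - compress (p i) (starEval (FreeAlgebra.ι ℂ (Sum.inr a)) x)‖)
              = fun _ => (0:ℝ) := by
            funext i
            rw [starEval_inr, starEval_inr, compress_star (hsa i) (hid i), sub_self]
            exact norm_zero (E := LinearMap.range (p i : H →ₗ[ℂ] H) →L[ℂ] LinearMap.range (p i : H →ₗ[ℂ] H))
          rw [hz]; exact tendsto_const_nhds
  | mul a b ha hb =>
      set y₁ := starEval a x with hy₁
      set y₂ := starEval b x with hy₂
      have hcm : Tendsto (fun i => ‖p i * y₂ - y₂ * p i‖) atTop (𝓝 (0:ℝ)) := by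
        have := hcomm y₂ (starEval_mem A x hx b)
        simpa [norm_sub_rev] using this
      set d₁ := fun i => ‖starEval a (fun c => compress (p i) (x c)) - compress (p i) y₁‖
      set d₂ := fun i => ‖starEval b (fun c => compress (p i) (x c)) - compress (p i) y₂‖
      have hbound : ∀ i,
          ‖starEval (a * b) (fun c => compress (p i) (x c)) - compress (p i) (starEval (a*b) x)‖
          ≤ d₁ i * (‖y₂‖ + d₂ i) + ‖y₁‖ * d₂ i + ‖y₁‖ * ‖p i * y₂ - y₂ * p i‖ := by
        intro i
        set E₁ := starEval a (fun c => compress (p i) (x c))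
        set E₂ := starEval b (fun c => compress (p i) (x c))
        set C₁ := compress (p i) y₁
        set C₂ := compress (p i) y₂
        have hsplit : starEval (a * b) (fun c => compress (p i) (x c))
            - compress (p i) (starEval (a*b) x)
            = (E₁ - C₁) * E₂ + C₁ * (E₂ - C₂) + (C₁ * C₂ - compress (p i) (y₁ * y₂)) := by
          rw [starEval_mul, starEval_mul, ← hy₁, ← hy₂, sub_mul, mul_sub]
          abel
        rw [hsplit]
        have h1 : ‖(E₁ - C₁) * E₂‖ ≤ d₁ i * (‖y₂‖ + d₂ i) := by
          have hE₂ : ‖E₂‖ ≤ ‖y₂‖ + d₂ i := by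
            calc ‖E₂‖ = ‖C₂ + (E₂ - C₂)‖ := by rw [show C₂ + (E₂ - C₂) = E₂ from by abel]
            _ ≤ ‖C₂‖ + ‖E₂ - C₂‖ := norm_add_le C₂ (E₂ - C₂)
            _ ≤ ‖y₂‖ + d₂ i := add_le_add (norm_compress_le (hsa i) (hid i) y₂) le_rfl
          calc ‖(E₁ - C₁) * E₂‖ ≤ ‖E₁ - C₁‖ * ‖E₂‖ := norm_mul_le (E₁ - C₁) E₂
          _ ≤ d₁ i * (‖y₂‖ + d₂ i) :=
              mul_le_mul le_rfl hE₂ (norm_nonneg E₂) (norm_nonneg (E₁ - C₁))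
        have h2 : ‖C₁ * (E₂ - C₂)‖ ≤ ‖y₁‖ * d₂ i := by
          calc ‖C₁ * (E₂ - C₂)‖ ≤ ‖C₁‖ * ‖E₂ - C₂‖ := norm_mul_le C₁ (E₂ - C₂)
          _ ≤ ‖y₁‖ * d₂ i :=
              mul_le_mul (norm_compress_le (hsa i) (hid i) y₁) le_rfl
                (norm_nonneg (E₂ - C₂)) (norm_nonneg y₁)
        have h3 : ‖C₁ * C₂ - compress (p i) (y₁ * y₂)‖ ≤ ‖y₁‖ * ‖p i * y₂ - y₂ * p i‖ :=
          compress_mul_defect (hsa i) (hid i) y₁ y₂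
        calc ‖(E₁ - C₁) * E₂ + C₁ * (E₂ - C₂) + (C₁ * C₂ - compress (p i) (y₁ * y₂))‖
            ≤ ‖(E₁ - C₁) * E₂‖ + ‖C₁ * (E₂ - C₂)‖ + ‖C₁ * C₂ - compress (p i) (y₁ * y₂)‖ :=
              norm_add₃_le (a := (E₁ - C₁) * E₂) (b := C₁ * (E₂ - C₂))
                (c := C₁ * C₂ - compress (p i) (y₁ * y₂))
        _ ≤ _ := add_le_add (add_le_add h1 h2) h3
      have hlim : Tendsto
          (fun i => d₁ i * (‖y₂‖ + d₂ i) + ‖y₁‖ * d₂ i + ‖y₁‖ * ‖p i * y₂ - y₂ * p i‖)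
          atTop (𝓝 (0:ℝ)) := by
        have := ((ha.mul ((tendsto_const_nhds (x := ‖y₂‖)).add hb)).add
          ((tendsto_const_nhds (x := ‖y₁‖)).mul hb)).add
          ((tendsto_const_nhds (x := ‖y₁‖)).mul hcm)
        simpa using this
      exact squeeze_zero (fun i => norm_nonneg
        ((starEval (a * b) fun c => compress (p i) (x c))
          - compress (p i) (starEval (a * b) x))) hbound hlim
  | add a b ha hb =>
      have hbound : ∀ i,
          ‖starEval (a + b) (fun c => compress (p i) (x c)) - compress (p i) (starEval (a+b) x)‖
          ≤ ‖starEval a (fun c => compress (p i) (x c)) - compress (p i) (starEval a x)‖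
            + ‖starEval b (fun c => compress (p i) (x c)) - compress (p i) (starEval b x)‖ := by
        intro i
        rw [starEval_add, starEval_add, compress_add]
        calc ‖starEval a (fun c => compress (p i) (x c)) + starEval b (fun c => compress (p i) (x c))
              - (compress (p i) (starEval a x) + compress (p i) (starEval b x))‖
            = ‖(starEval a (fun c => compress (p i) (x c)) - compress (p i) (starEval a x))
            + (starEval b (fun c => compress (p i) (x c)) - compress (p i) (starEval b x))‖ := by
              rw [show (starEval a (fun c => compress (p i) (x c)) - compress (p i) (starEval a x))
                + (starEval b (fun c => compress (p i) (x c)) - compress (p i) (starEval b x))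
                = starEval a (fun c => compress (p i) (x c)) + starEval b (fun c => compress (p i) (x c))
                  - (compress (p i) (starEval a x) + compress (p i) (starEval b x)) from by abel]
        _ ≤ _ := norm_add_le
            (starEval a (fun c => compress (p i) (x c)) - compress (p i) (starEval a x))
            (starEval b (fun c => compress (p i) (x c)) - compress (p i) (starEval b x))
      have hlim := ha.add hb
      rw [add_zero] at hlim
      exact squeeze_zero (fun i => norm_nonneg
        ((starEval (a + b) fun c => compress (p i) (x c))
          - compress (p i) (starEval (a + b) x))) hbound hlim

lemma pxp_pointwise {p : ℕ → H →L[ℂ] H}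
    (hnorm : ∀ i, ‖p i‖ ≤ 1) (hsa : ∀ i, IsSelfAdjoint (p i))
    (hstrong : ∀ ξ : H, Tendsto (fun i => p i ξ) atTop (𝓝 ξ))
    {n : ℕ} (x : Fin n → H →L[ℂ] H)
    (Q : FreeAlgebra ℂ (Fin n ⊕ Fin n)) :
    (∃ M, ∀ i, ‖starEval Q (fun a => p i * x a * p i)‖ ≤ M) ∧
    ∀ ξ : H, Tendsto (fun i => starEval Q (fun a => p i * x a * p i) ξ) atTop
      (𝓝 (starEval Q x ξ)) := by
  induction Q with
  | grade0 c =>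
      refine ⟨⟨‖algebraMap ℂ (H →L[ℂ] H) c‖, fun i => by rw [starEval_algebraMap]⟩, fun ξ => ?_⟩
      rw [starEval_algebraMap]
      have : (fun i : ℕ => starEval (algebraMap ℂ _ c) (fun a => p i * x a * p i) ξ)
          = fun _ => algebraMap ℂ (H →L[ℂ] H) c ξ := by
        funext i; rw [starEval_algebraMap]
      rw [this]; exact tendsto_const_nhds
  | grade1 j =>
      cases j with
      | inl a =>
          constructor
          · refine ⟨‖x a‖, fun i => ?_⟩
            rw [starEval_inl]
            calc ‖p i * x a * p i‖ ≤ ‖p i * x a‖ * ‖p i‖ := norm_mul_le _ _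
            _ ≤ ‖p i‖ * ‖x a‖ * ‖p i‖ := by gcongr; exact norm_mul_le _ _
            _ ≤ 1 * ‖x a‖ * 1 := by gcongr <;> [exact hnorm i; exact hnorm i]
            _ = ‖x a‖ := by ring
          · intro ξ
            have : (fun i => starEval (FreeAlgebra.ι ℂ (Sum.inl a))
                (fun b => p i * x b * p i) ξ) = fun i => p i (x a (p i ξ)) := by
              funext i; rw [starEval_inl]; rfl
            rw [this, starEval_inl]
            exact aux_strong hnorm hstrong (((x a).continuous.tendsto ξ).comp (hstrong ξ))
      | inr a =>
          have hstar : ∀ i, starEval (FreeAlgebra.ι ℂ (Sum.inr a)) (fun b => p i * x b * p i)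
              = p i * star (x a) * p i := by
            intro i
            rw [starEval_inr, star_mul, star_mul, (hsa i).star_eq, mul_assoc]
          constructor
          · refine ⟨‖star (x a)‖, fun i => ?_⟩
            rw [hstar i]
            calc ‖p i * star (x a) * p i‖ ≤ ‖p i * star (x a)‖ * ‖p i‖ := norm_mul_le _ _
            _ ≤ ‖p i‖ * ‖star (x a)‖ * ‖p i‖ := by gcongr; exact norm_mul_le _ _
            _ ≤ 1 * ‖star (x a)‖ * 1 := by gcongr <;> [exact hnorm i; exact hnorm i]
            _ = ‖star (x a)‖ := by ring
          · intro ξ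
            have : (fun i => starEval (FreeAlgebra.ι ℂ (Sum.inr a))
                (fun b => p i * x b * p i) ξ) = fun i => p i (star (x a) (p i ξ)) := by
              funext i; rw [hstar i]; rfl
            rw [this, starEval_inr]
            exact aux_strong hnorm hstrong
              (((star (x a)).continuous.tendsto ξ).comp (hstrong ξ))
  | mul a b ha hb =>
      obtain ⟨⟨M₁, hM₁⟩, h₁⟩ := ha
      obtain ⟨⟨M₂, hM₂⟩, h₂⟩ := hb
      have hM₁0 : (0:ℝ) ≤ M₁ := le_trans (norm_nonneg _) (hM₁ 0)
      constructor
      · refine ⟨M₁ * M₂, fun i => ?_⟩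
        rw [starEval_mul]
        calc ‖_ * _‖ ≤ ‖starEval a (fun c => p i * x c * p i)‖
            * ‖starEval b (fun c => p i * x c * p i)‖ := norm_mul_le _ _
        _ ≤ M₁ * M₂ := mul_le_mul (hM₁ i) (hM₂ i) (norm_nonneg _) hM₁0
      · intro ξ
        rw [starEval_mul]
        have hkey : ∀ i, starEval (a * b) (fun c => p i * x c * p i) ξ
            = starEval a (fun c => p i * x c * p i)
              (starEval b (fun c => p i * x c * p i) ξ) := by
          intro i; rw [starEval_mul]; rfl
        rw [show (fun i => starEval (a * b) (fun c => p i * x c * p i) ξ)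
          = fun i => starEval a (fun c => p i * x c * p i)
              (starEval b (fun c => p i * x c * p i) ξ) from funext hkey]
        rw [tendsto_iff_norm_sub_tendsto_zero]
        set w := starEval b x ξ
        have hbnd : ∀ i, ‖starEval a (fun c => p i * x c * p i)
              (starEval b (fun c => p i * x c * p i) ξ)
            - starEval a x (starEval b x ξ)‖
            ≤ M₁ * ‖starEval b (fun c => p i * x c * p i) ξ - w‖
              + ‖starEval a (fun c => p i * x c * p i) w - starEval a x w‖ := by
          intro i
          set E₁ := starEval a (fun c => p i * x c * p i)
          set v := starEval b (fun c => p i * x c * p i) ξ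
          calc ‖E₁ v - starEval a x w‖
              = ‖E₁ (v - w) + (E₁ w - starEval a x w)‖ := by rw [map_sub]; abel_nf
          _ ≤ ‖E₁ (v - w)‖ + ‖E₁ w - starEval a x w‖ := norm_add_le _ _
          _ ≤ M₁ * ‖v - w‖ + ‖E₁ w - starEval a x w‖ := by
              gcongr
              calc ‖E₁ (v - w)‖ ≤ ‖E₁‖ * ‖v - w‖ := E₁.le_opNorm _
              _ ≤ M₁ * ‖v - w‖ := by gcongr; exact hM₁ i
        have hlim : Tendsto (fun i => M₁ * ‖starEval b (fun c => p i * x c * p i) ξ - w‖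
            + ‖starEval a (fun c => p i * x c * p i) w - starEval a x w‖) atTop (𝓝 0) := by
          have t1 := (tendsto_iff_norm_sub_tendsto_zero).mp (h₂ ξ)
          have t2 := (tendsto_iff_norm_sub_tendsto_zero).mp (h₁ w)
          have := ((tendsto_const_nhds (x := M₁)).mul t1).add t2
          simpa using this
        exact squeeze_zero (fun i => norm_nonneg _) hbnd hlim
  | add a b ha hb =>
      obtain ⟨⟨M₁, hM₁⟩, h₁⟩ := ha
      obtain ⟨⟨M₂, hM₂⟩, h₂⟩ := hb
      constructor
      · refine ⟨M₁ + M₂, fun i => ?_⟩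
        rw [starEval_add]
        exact (norm_add_le _ _).trans (add_le_add (hM₁ i) (hM₂ i))
      · intro ξ
        have : (fun i => starEval (a + b) (fun c => p i * x c * p i) ξ)
            = fun i => starEval a (fun c => p i * x c * p i) ξ
              + starEval b (fun c => p i * x c * p i) ξ := by
          funext i; rw [starEval_add]; rfl
        rw [this, starEval_add]
        exact (h₁ ξ).add (h₂ ξ)

end main

/-- If `A ⊆ B(H)` is a unital separable quasidiagonal C*-algebra and `x_1, …, x_n ∈ A`, then
for every `ε > 0`, finitely many `*`-polynomials `P_1, …, P_r` and vectors `ξ_1, …, ξ_s ∈ H`,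
there is a finite-rank orthogonal projection `p` such that
(i) `‖P_i(p x_1 p, …, p x_n p) ξ_j − P_i(x_1, …, x_n) ξ_j‖ < ε` and
(ii) `|‖P_i(c_p(x_1), …, c_p(x_n))‖_{B(pH)} − ‖P_i(x_1, …, x_n)‖| < ε`. -/
theorem quasidiagonal_compression
    {H : Type} [NormedAddCommGroup H] [InnerProductSpace ℂ H] [CompleteSpace H]
    (A : StarSubalgebra ℂ (H →L[ℂ] H)) (hA : IsClosed (A : Set (H →L[ℂ] H)))
    [TopologicalSpace.SeparableSpace A]
    (hqd : ∃ p : ℕ → H →L[ℂ] H,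
      (∀ i, IsSelfAdjoint (p i) ∧ IsIdempotentElem (p i) ∧
        FiniteDimensional ℂ (LinearMap.range (p i : H →ₗ[ℂ] H))) ∧
      Monotone (fun i => LinearMap.range (p i : H →ₗ[ℂ] H)) ∧
      (∀ ξ : H, Tendsto (fun i => p i ξ) atTop (𝓝 ξ)) ∧
      (∀ x ∈ A, Tendsto (fun i => ‖x * p i - p i * x‖) atTop (𝓝 (0 : ℝ))))
    (n : ℕ) (x : Fin n → H →L[ℂ] H) (hx : ∀ i, x i ∈ A)
    (ε : ℝ) (hε : 0 < ε)
    (r s : ℕ) (P : Fin r → FreeAlgebra ℂ (Fin n ⊕ Fin n)) (ξ : Fin s → H) :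
    ∃ p : H →L[ℂ] H, IsSelfAdjoint p ∧ IsIdempotentElem p ∧
      ∃ _ : FiniteDimensional ℂ (LinearMap.range (p : H →ₗ[ℂ] H)),
        (∀ (i : Fin r) (j : Fin s),
          ‖starEval (P i) (fun a => p * x a * p) (ξ j) - starEval (P i) x (ξ j)‖ < ε) ∧
        (∀ i : Fin r,
          |‖starEval (P i) (fun a => compress p (x a))‖ - ‖starEval (P i) x‖| < ε) := by
  obtain ⟨p, hp, hmono, hstrong, hcomm⟩ := hqd
  have hsa : ∀ i, IsSelfAdjoint (p i) := fun i => (hp i).1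
  have hid : ∀ i, IsIdempotentElem (p i) := fun i => (hp i).2.1
  haveI hfd : ∀ i, FiniteDimensional ℂ (LinearMap.range (p i : H →ₗ[ℂ] H)) := fun i => (hp i).2.2
  have hnorm : ∀ i, ‖p i‖ ≤ 1 := fun i => proj_norm_le_one (hsa i) (hid i)
  have h1 : ∀ (k : Fin r) (j : Fin s), ∀ᶠ i in atTop,
      ‖starEval (P k) (fun a => p i * x a * p i) (ξ j) - starEval (P k) x (ξ j)‖ < ε := by
    intro k j
    have ht := (pxp_pointwise hnorm hsa hstrong x (P k)).2 (ξ j)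
    have ht' := (tendsto_iff_norm_sub_tendsto_zero).mp ht
    exact ht'.eventually (eventually_lt_nhds hε)
  have h2 : ∀ k : Fin r, ∀ᶠ i in atTop,
      |‖starEval (P k) (fun a => compress (p i) (x a))‖ - ‖starEval (P k) x‖| < ε := by
    intro k
    set y := starEval (P k) x with hy
    have hM := compress_poly_tendsto A hsa hid hcomm x hx (P k)
    have hg := tendsto_norm_compress hsa hid hstrong y
    have hdiff : Tendsto (fun i => ‖starEval (P k) (fun a => compress (p i) (x a))‖
        - ‖compress (p i) y‖) atTop (𝓝 0) := by
      refine squeeze_zero_norm (fun i => ?_) hM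
      rw [Real.norm_eq_abs]
      exact abs_norm_sub_norm_le (starEval (P k) (fun a => compress (p i) (x a)))
        (compress (p i) y)
    have hconv : Tendsto (fun i => ‖starEval (P k) (fun a => compress (p i) (x a))‖)
        atTop (𝓝 ‖y‖) := by
      have := hdiff.add hg
      simpa using this
    filter_upwards [Metric.tendsto_nhds.mp hconv ε hε] with i hi
    rwa [Real.dist_eq] at hi
  have hall : ∀ᶠ i in atTop,
      (∀ (k : Fin r) (j : Fin s),
        ‖starEval (P k) (fun a => p i * x a * p i) (ξ j) - starEval (P k) x (ξ j)‖ < ε) ∧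
      (∀ k : Fin r,
        |‖starEval (P k) (fun a => compress (p i) (x a))‖ - ‖starEval (P k) x‖| < ε) := by
    refine Filter.Eventually.and ?_ ?_
    · exact eventually_all.mpr fun k => eventually_all.mpr fun j => h1 k j
    · exact eventually_all.mpr h2
  obtain ⟨i, hi⟩ := hall.exists
  exact ⟨p i, hsa i, hid i, hfd i, hi.1, hi.2⟩
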